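/- Fix r₁ > 0. Let θ₁, θ₂, … be independent random variables uniformly distributed on [0, 2π), and define the random walk on the upper half-plane by z_k = (R(θ₁)·A_{r₁}·R(θ₂)·A_{r₁}·⋯·R(θ_k)·A_{r₁})·i, where the product of matrices acts on i ∈ ℍ by Möbius transformations. Then there exist constants C, c > 0 depending only on r₁ such that for every k ≥ 1 and every λ ≥ 0, P(|d(z_k, i) − α_{r₁}·r₁·k| ≥ λ·√k) ≤ C·e^{−c·λ²}, where d is the hyperbolic distance. -/

import Mathlib

open Real MeasureTheory ProbabilityTheory

/-- The rotation matrix `R(θ)` with rows `(cos θ, sin θ)` and `(−sin θ, cos θ)`. -/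
noncomputable def rotMat (θ : ℝ) : Matrix (Fin 2) (Fin 2) ℝ :=
  !![Real.cos θ, Real.sin θ; -Real.sin θ, Real.cos θ]

/-- The diagonal matrix `A_r = diag(e^{r/2}, e^{−r/2})`. -/
noncomputable def diagMat (r : ℝ) : Matrix (Fin 2) (Fin 2) ℝ :=
  !![Real.exp (r / 2), 0; 0, Real.exp (-r / 2)]

/-- The Möbius action of a real 2×2 matrix on a point of the complex plane. -/
noncomputable def moebius (m : Matrix (Fin 2) (Fin 2) ℝ) (z : ℂ) : ℂ :=
  ((m 0 0 : ℝ) * z + (m 0 1 : ℝ)) / ((m 1 0 : ℝ) * z + (m 1 1 : ℝ))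

/-- The position after `k` steps of the distance-`r₁` random walk on the upper half-plane
started at `i`, driven by the angles `θ₁, …, θ_k`:
`z_k = (R(θ₁)·A_{r₁}·R(θ₂)·A_{r₁}·⋯·R(θ_k)·A_{r₁})·i`. -/
noncomputable def walk (r₁ : ℝ) (k : ℕ) (θ : ℕ → ℝ) : ℂ :=
  moebius ((List.ofFn fun j : Fin k => rotMat (θ j) * diagMat r₁).prod) Complex.I

/-- The inverse hyperbolic cosine: `arcosh x = log (x + √(x² − 1))`. -/
noncomputable def arcosh (x : ℝ) : ℝ := Real.log (x + Real.sqrt (x ^ 2 - 1))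

/-- The hyperbolic distance on the upper half-plane, determined by
`cosh d(z,w) = 1 + |z−w|²/(2·Im z·Im w)`. -/
noncomputable def hypDist (z w : ℂ) : ℝ :=
  _root_.arcosh (1 + ‖z - w‖ ^ 2 / (2 * z.im * w.im))

/-- The linear rate of escape of the step-`r₁` random walk on the hyperbolic plane. -/
noncomputable def alphaRate (r₁ : ℝ) : ℝ :=
  (1 / (π * r₁)) *
    ∫ θ in (0:ℝ)..π, Real.log (Real.exp r₁ * Real.cos θ ^ 2 + Real.exp (-r₁) * Real.sin θ ^ 2)

namespace WalkConc

/-- `F r φ = ‖A_r u_φ‖²` for the unit vector at angle `φ`. -/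
noncomputable def F (r φ : ℝ) : ℝ :=
  Real.exp r * Real.cos φ ^ 2 + Real.exp (-r) * Real.sin φ ^ 2

noncomputable def unitVec (β : ℝ) : Fin 2 → ℝ := ![Real.cos β, Real.sin β]

noncomputable def Mk (r : ℝ) (k : ℕ) (x : Fin k → ℝ) : Matrix (Fin 2) (Fin 2) ℝ :=
  (List.ofFn fun j : Fin k => rotMat (x j) * diagMat r).prod

def sq2 (v : Fin 2 → ℝ) : ℝ := v 0 ^ 2 + v 1 ^ 2

noncomputable def stepA (r φ : ℝ) : ℝ :=
  Complex.arg ⟨Real.exp (r / 2) * Real.cos φ, Real.exp (-(r / 2)) * Real.sin φ⟩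

variable {r : ℝ}

lemma F_pos (hr : 0 ≤ r) (φ : ℝ) : 0 < F r φ := by
  have h1 := Real.cos_sq_add_sin_sq φ
  have h2 := Real.exp_pos r
  have h3 := Real.exp_pos (-r)
  have h4 : Real.exp (-r) ≤ Real.exp r := Real.exp_le_exp.2 (by linarith)
  have h5 : Real.cos φ ^ 2 ≥ 0 := sq_nonneg _
  have h6 : Real.sin φ ^ 2 ≥ 0 := sq_nonneg _
  unfold F
  nlinarith

lemma F_le (hr : 0 ≤ r) (φ : ℝ) : F r φ ≤ Real.exp r := by
  have h1 := Real.cos_sq_add_sin_sq φ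
  have h4 : Real.exp (-r) ≤ Real.exp r := Real.exp_le_exp.2 (by linarith)
  have h6 : Real.sin φ ^ 2 ≥ 0 := sq_nonneg _
  have h7 : Real.exp r * Real.cos φ ^ 2 + Real.exp r * Real.sin φ ^ 2 = Real.exp r := by
    rw [← mul_add, h1, mul_one]
  unfold F; linarith [mul_le_mul_of_nonneg_right h4 h6]

lemma F_ge (hr : 0 ≤ r) (φ : ℝ) : Real.exp (-r) ≤ F r φ := by
  have h1 := Real.cos_sq_add_sin_sq φ
  have h4 : Real.exp (-r) ≤ Real.exp r := Real.exp_le_exp.2 (by linarith)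
  have h5 : Real.cos φ ^ 2 ≥ 0 := sq_nonneg _
  have h7 : Real.exp (-r) * Real.cos φ ^ 2 + Real.exp (-r) * Real.sin φ ^ 2 = Real.exp (-r) := by
    rw [← mul_add, h1, mul_one]
  unfold F; linarith [mul_le_mul_of_nonneg_right h4 h5]

lemma abs_log_F_le (hr : 0 ≤ r) (φ : ℝ) : |Real.log (F r φ)| ≤ r := by
  rw [abs_le]
  constructor
  · have := Real.log_le_log (Real.exp_pos (-r)) (F_ge hr φ)
    rwa [Real.log_exp] at this
  · have := Real.log_le_log (F_pos hr φ) (F_le hr φ)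
    rwa [Real.log_exp] at this

lemma unit_vecMul_rot (β a : ℝ) :
    Matrix.vecMul (unitVec β) (rotMat a) = unitVec (β + a) := by
  funext j
  fin_cases j <;>
    simp [Matrix.vecMul, dotProduct, Fin.sum_univ_two, rotMat, unitVec,
      Real.cos_add, Real.sin_add] <;> ring

lemma step_eq (hr : 0 ≤ r) (β a : ℝ) :
    Matrix.vecMul (unitVec β) (rotMat a * diagMat r) =
      Real.sqrt (F r (β + a)) • unitVec (stepA r (β + a)) := by
  set φ := β + a
  set z : ℂ := ⟨Real.exp (r / 2) * Real.cos φ, Real.exp (-(r / 2)) * Real.sin φ⟩ with hz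
  have e1 : Real.exp (r/2) * Real.exp (r/2) = Real.exp r := by
    rw [← Real.exp_add]; ring_nf
  have e2 : Real.exp (-(r/2)) * Real.exp (-(r/2)) = Real.exp (-r) := by
    rw [← Real.exp_add]; ring_nf
  have hnormSq : Complex.normSq z = F r φ := by
    simp only [Complex.normSq_mk, hz, F]
    nlinarith [e1, e2]
  have habs : ‖z‖ = Real.sqrt (F r φ) := by
    rw [Complex.norm_def, hnormSq]
  have hzne : z ≠ 0 := by
    intro h
    have : Complex.normSq z = 0 := by rw [h]; simp
    rw [hnormSq] at this
    exact absurd this (ne_of_gt (F_pos hr φ))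
  have hsqrtpos : 0 < Real.sqrt (F r φ) := Real.sqrt_pos.2 (F_pos hr φ)
  rw [← Matrix.vecMul_vecMul, unit_vecMul_rot]
  funext j
  fin_cases j
  · show (Matrix.vecMul (unitVec φ) (diagMat r)) 0 = _
    simp only [Matrix.vecMul, dotProduct, Fin.sum_univ_two, diagMat, unitVec,
      Pi.smul_apply, smul_eq_mul]
    simp only [stepA, Matrix.cons_val_zero, Matrix.cons_val_one, Matrix.head_cons,
      Matrix.cons_val', Matrix.empty_val', Matrix.cons_val_fin_one]
    rw [Complex.cos_arg hzne, habs]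
    show Real.cos φ * Real.exp (r/2) + Real.sin φ * 0 = Real.sqrt (F r φ) * (z.re / Real.sqrt (F r φ))
    rw [mul_div_cancel₀ _ (ne_of_gt hsqrtpos)]
    show Real.cos φ * Real.exp (r/2) + Real.sin φ * 0 = Real.exp (r/2) * Real.cos φ
    ring
  · show (Matrix.vecMul (unitVec φ) (diagMat r)) 1 = _
    simp only [Matrix.vecMul, dotProduct, Fin.sum_univ_two, diagMat, unitVec,
      Pi.smul_apply, smul_eq_mul]
    simp only [stepA, Matrix.cons_val_zero, Matrix.cons_val_one, Matrix.head_cons,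
      Matrix.cons_val', Matrix.empty_val', Matrix.cons_val_fin_one]
    rw [Complex.sin_arg, habs]
    show Real.cos φ * 0 + Real.sin φ * Real.exp (-r/2) = Real.sqrt (F r φ) * (z.im / Real.sqrt (F r φ))
    rw [mul_div_cancel₀ _ (ne_of_gt hsqrtpos)]
    show Real.cos φ * 0 + Real.sin φ * Real.exp (-r/2) = Real.exp (-(r/2)) * Real.sin φ
    rw [neg_div] at *
    ring


variable {r : ℝ}

lemma Mk_zero (x : Fin 0 → ℝ) : Mk r 0 x = 1 := by
  simp [Mk]

lemma Mk_succ (k : ℕ) (x : Fin (k + 1) → ℝ) :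
    Mk r (k + 1) x = (rotMat (x 0) * diagMat r) * Mk r k (Fin.tail x) := by
  simp only [Mk, List.ofFn_succ, List.prod_cons]
  rfl

lemma sq2_smul (c : ℝ) (v : Fin 2 → ℝ) : sq2 (c • v) = c ^ 2 * sq2 v := by
  simp [sq2]; ring

lemma sq2_unitVec (β : ℝ) : sq2 (unitVec β) = 1 := by
  simp [sq2, unitVec, Real.cos_sq_add_sin_sq]

/-- Fundamental factorization of the squared row norm. -/
lemma sq2_succ (hr : 0 ≤ r) (k : ℕ) (x : Fin (k + 1) → ℝ) (β : ℝ) :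
    sq2 (Matrix.vecMul (unitVec β) (Mk r (k + 1) x)) =
      F r (β + x 0) *
        sq2 (Matrix.vecMul (unitVec (stepA r (β + x 0))) (Mk r k (Fin.tail x))) := by
  rw [Mk_succ, ← Matrix.vecMul_vecMul, step_eq hr, Matrix.smul_vecMul, sq2_smul,
    Real.sq_sqrt (le_of_lt (F_pos hr _))]

lemma sq2_bounds (hr : 0 ≤ r) :
    ∀ (k : ℕ) (x : Fin k → ℝ) (β : ℝ),
      Real.exp (-(r * k)) ≤ sq2 (Matrix.vecMul (unitVec β) (Mk r k x)) ∧
        sq2 (Matrix.vecMul (unitVec β) (Mk r k x)) ≤ Real.exp (r * k) := by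
  intro k
  induction k with
  | zero =>
      intro x β
      rw [Mk_zero, Matrix.vecMul_one, sq2_unitVec]
      norm_num
  | succ k ih =>
      intro x β
      rw [sq2_succ hr]
      obtain ⟨h1, h2⟩ := ih (Fin.tail x) (stepA r (β + x 0))
      have hF1 := F_ge hr (β + x 0)
      have hF2 := F_le hr (β + x 0)
      have hFpos := F_pos hr (β + x 0)
      have hsq_pos : 0 < sq2 (Matrix.vecMul (unitVec (stepA r (β + x 0))) (Mk r k (Fin.tail x))) :=
        lt_of_lt_of_le (Real.exp_pos _) h1
      constructor
      · calc Real.exp (-(r * (k + 1 : ℕ))) = Real.exp (-r) * Real.exp (-(r * k)) := by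
              rw [← Real.exp_add]; congr 1; push_cast; ring
        _ ≤ _ := by
              apply mul_le_mul hF1 h1 (le_of_lt (Real.exp_pos _)) (le_of_lt hFpos)
      · calc F r (β + x 0) * sq2 (Matrix.vecMul (unitVec (stepA r (β + x 0))) (Mk r k (Fin.tail x)))
            ≤ Real.exp r * Real.exp (r * k) := by
              apply mul_le_mul hF2 h2 (le_of_lt hsq_pos) (le_of_lt (Real.exp_pos _))
        _ = Real.exp (r * (k + 1 : ℕ)) := by rw [← Real.exp_add]; congr 1; push_cast; ring

lemma sq2_pos (hr : 0 ≤ r) (k : ℕ) (x : Fin k → ℝ) (β : ℝ) :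
    0 < sq2 (Matrix.vecMul (unitVec β) (Mk r k x)) :=
  lt_of_lt_of_le (Real.exp_pos _) (sq2_bounds hr k x β).1

lemma det_Mk (k : ℕ) (x : Fin k → ℝ) : (Mk r k x).det = 1 := by
  induction k with
  | zero => simp [Mk_zero]
  | succ k ih =>
      rw [Mk_succ, Matrix.det_mul, Matrix.det_mul, ih (Fin.tail x)]
      have h1 : (rotMat (x 0)).det = 1 := by
        rw [rotMat, Matrix.det_fin_two_of]
        nlinarith [Real.cos_sq_add_sin_sq (x 0)]
      have h2 : (diagMat r).det = 1 := by
        have h0 : r / 2 + -r / 2 = 0 := by ring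
        rw [diagMat, Matrix.det_fin_two_of, ← Real.exp_add, h0, Real.exp_zero]
        ring
      rw [h1, h2]; ring

lemma continuous_rotMat : Continuous fun θ : ℝ => rotMat θ := by
  apply continuous_matrix
  intro i j
  fin_cases i <;> fin_cases j <;> simp [rotMat] <;> fun_prop

lemma continuous_Mk (k : ℕ) : Continuous fun x : Fin k → ℝ => Mk r k x := by
  induction k with
  | zero => simp only [Mk_zero]; exact continuous_const
  | succ k ih =>
      simp only [Mk_succ]
      exact ((continuous_rotMat.comp (continuous_apply 0)).matrix_mul
        continuous_const).matrix_mul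
        (ih.comp (continuous_pi fun j => continuous_apply j.succ))


/-- Sum of squares of the entries of a 2×2 matrix. -/
def Q2 (m : Matrix (Fin 2) (Fin 2) ℝ) : ℝ :=
  m 0 0 ^ 2 + m 0 1 ^ 2 + m 1 0 ^ 2 + m 1 1 ^ 2

lemma Q2_ge_two {m : Matrix (Fin 2) (Fin 2) ℝ} (hdet : m.det = 1) : 2 ≤ Q2 m := by
  rw [Matrix.det_fin_two] at hdet
  unfold Q2
  nlinarith [sq_nonneg (m 0 0 - m 1 1), sq_nonneg (m 0 1 + m 1 0)]

lemma hypDist_moebius {m : Matrix (Fin 2) (Fin 2) ℝ} (hdet : m.det = 1) :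
    hypDist (moebius m Complex.I) Complex.I = _root_.arcosh (Q2 m / 2) := by
  rw [Matrix.det_fin_two] at hdet
  set a := m 0 0; set b := m 0 1; set c := m 1 0; set d := m 1 1
  have hS : (0:ℝ) < c ^ 2 + d ^ 2 := by
    rcases eq_or_ne c 0 with hc | hc
    · rcases eq_or_ne d 0 with hd | hd
      · exfalso; rw [hc, hd] at hdet; simp at hdet
      · positivity
    · positivity
  set w : ℂ := (c : ℂ) * Complex.I + (d : ℂ) with hw
  have hwre : w.re = d := by simp [hw]
  have hwim : w.im = c := by simp [hw]
  have hnormSqw : Complex.normSq w = c ^ 2 + d ^ 2 := by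
    rw [Complex.normSq_apply, hwre, hwim]; ring
  have hwne : w ≠ 0 := by
    intro h
    rw [h] at hnormSqw; simp at hnormSqw
    nlinarith
  set z : ℂ := moebius m Complex.I with hzdef
  have hz : z = ((a : ℂ) * Complex.I + (b : ℂ)) / w := rfl
  have hnum : (a : ℂ) * Complex.I + (b : ℂ) - Complex.I * w =
      (((b + c : ℝ) : ℂ) + ((a - d : ℝ) : ℂ) * Complex.I) := by
    rw [hw]
    push_cast
    ring_nf
    rw [Complex.I_sq]
    ring
  have hzsub : z - Complex.I = (((b + c : ℝ) : ℂ) + ((a - d : ℝ) : ℂ) * Complex.I) / w := by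
    rw [hz, ← hnum]
    field_simp
  have habs : ‖z - Complex.I‖ ^ 2 =
      ((b + c) ^ 2 + (a - d) ^ 2) / (c ^ 2 + d ^ 2) := by
    rw [hzsub, Complex.sq_norm, Complex.normSq_div, hnormSqw, Complex.normSq_apply]
    simp
    ring
  have hzim : z.im = 1 / (c ^ 2 + d ^ 2) := by
    rw [hz, Complex.div_im]
    simp only [Complex.add_im, Complex.mul_im, Complex.ofReal_re, Complex.I_im,
      Complex.ofReal_im, Complex.I_re, Complex.add_re, Complex.mul_re]
    rw [hwre, hwim, hnormSqw]
    field_simp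
    linarith [hdet]
  have : 1 + ‖z - Complex.I‖ ^ 2 / (2 * z.im * Complex.I.im) = Q2 m / 2 := by
    rw [habs, hzim, Complex.I_im]
    unfold Q2
    field_simp
    nlinarith [hdet]
  rw [hypDist, this]

lemma arcosh_sandwich {x : ℝ} (hx : 1 ≤ x) :
    Real.log x ≤ _root_.arcosh x ∧ _root_.arcosh x ≤ Real.log (2 * x) := by
  have hx0 : (0:ℝ) < x := by linarith
  have hs0 : 0 ≤ Real.sqrt (x ^ 2 - 1) := Real.sqrt_nonneg _
  have hs1 : Real.sqrt (x ^ 2 - 1) ≤ x := by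
    have h := Real.sqrt_le_sqrt (by nlinarith : x ^ 2 - 1 ≤ x ^ 2)
    rwa [Real.sqrt_sq hx0.le] at h
  constructor
  · exact Real.log_le_log hx0 (by linarith)
  · exact Real.log_le_log (by linarith) (by linarith)

/-- The key deterministic sandwich: `|hypDist − log Q2| ≤ log 2`. -/
lemma hypDist_log_Q2 {m : Matrix (Fin 2) (Fin 2) ℝ} (hdet : m.det = 1) :
    |hypDist (moebius m Complex.I) Complex.I - Real.log (Q2 m)| ≤ Real.log 2 := by
  have hQ := Q2_ge_two hdet
  have h1 : (1:ℝ) ≤ Q2 m / 2 := by linarith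
  obtain ⟨hlo, hhi⟩ := arcosh_sandwich h1
  rw [hypDist_moebius hdet]
  have e1 : Real.log (2 * (Q2 m / 2)) = Real.log (Q2 m) := by congr 1; ring
  have e2 : Real.log (Q2 m / 2) = Real.log (Q2 m) - Real.log 2 := by
    rw [Real.log_div (by linarith) (by norm_num)]
  rw [abs_le]
  constructor <;> [linarith [hlo, e2]; linarith [hhi, e1]]


noncomputable def nu : Measure ℝ :=
  (ENNReal.ofReal (2 * π))⁻¹ • volume.restrict (Set.Ico (0:ℝ) (2 * π))

noncomputable def mu0 (r : ℝ) : ℝ := (1 / π) * ∫ θ in (0:ℝ)..π, Real.log (F r θ)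

variable {r : ℝ}

lemma two_pi_pos : (0:ℝ) < 2 * π := by positivity

instance : IsProbabilityMeasure nu := by
  constructor
  rw [nu]
  simp only [Measure.smul_apply, Measure.restrict_apply MeasurableSet.univ,
    Set.univ_inter, Real.volume_Ico, smul_eq_mul]
  rw [sub_zero, ← ENNReal.div_eq_inv_mul, ENNReal.div_self]
  · exact (ne_of_gt (ENNReal.ofReal_pos.2 two_pi_pos))
  · exact ENNReal.ofReal_ne_top

lemma continuous_logF (hr : 0 ≤ r) : Continuous fun φ => Real.log (F r φ) := by
  apply Continuous.log
  · unfold F; fun_prop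
  · exact fun x => ne_of_gt (F_pos hr x)

lemma periodic_logF : Function.Periodic (fun φ => Real.log (F r φ)) π := by
  intro x
  simp only [F]
  rw [Real.cos_add_pi, Real.sin_add_pi]
  ring_nf

lemma periodic_logF' : Function.Periodic (fun φ => Real.log (F r φ)) (2 * π) := by
  have h := (periodic_logF (r := r)).nat_mul 2
  norm_num at h
  exact h

lemma abs_mu0_le (hr : 0 ≤ r) : |mu0 r| ≤ r := by
  have h : ‖∫ θ in (0:ℝ)..π, Real.log (F r θ)‖ ≤ r * |π - 0| := by
    apply intervalIntegral.norm_integral_le_of_norm_le_const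
    intro x _
    rw [Real.norm_eq_abs]
    exact abs_log_F_le hr x
  rw [Real.norm_eq_abs, sub_zero, abs_of_pos Real.pi_pos] at h
  rw [mu0, abs_mul, abs_of_pos (by positivity : (0:ℝ) < 1 / π)]
  calc 1 / π * |∫ θ in (0:ℝ)..π, Real.log (F r θ)| ≤ 1 / π * (r * π) := by
        apply mul_le_mul_of_nonneg_left h (by positivity)
    _ = r := by field_simp
  
/-- Translation invariance: the average of `log F` over a full uniform turn is `mu0`. -/
lemma integral_logF (hr : 0 ≤ r) (β : ℝ) :
    ∫ a, Real.log (F r (β + a)) ∂nu = mu0 r := by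
  have hInt : ∀ u v : ℝ, IntervalIntegrable (fun φ => Real.log (F r φ)) volume u v :=
    fun u v => (continuous_logF hr).intervalIntegrable u v
  rw [nu, integral_smul_measure]
  rw [ENNReal.toReal_inv, ENNReal.toReal_ofReal (le_of_lt two_pi_pos)]
  have h1 : ∫ a in Set.Ico (0:ℝ) (2 * π), Real.log (F r (β + a)) =
      ∫ a in (0:ℝ)..(2 * π), Real.log (F r (β + a)) := by
    rw [intervalIntegral.integral_of_le (le_of_lt two_pi_pos)]
    exact setIntegral_congr_set Ico_ae_eq_Ioc
  have h2 : ∫ a in (0:ℝ)..(2 * π), Real.log (F r (β + a)) =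
      ∫ u in β..(β + 2 * π), Real.log (F r u) := by
    rw [intervalIntegral.integral_comp_add_left (fun u => Real.log (F r u)) β, add_zero]
  have h3 : ∫ u in β..(β + 2 * π), Real.log (F r u) =
      ∫ u in (0:ℝ)..(2 * π), Real.log (F r u) := by
    have := (periodic_logF' (r := r)).intervalIntegral_add_eq β 0
    rwa [zero_add] at this
  have h4 : ∫ u in (0:ℝ)..(2 * π), Real.log (F r u) =
      2 * ∫ u in (0:ℝ)..π, Real.log (F r u) := by
    have hsplit := intervalIntegral.integral_add_adjacent_intervals
      (a := (0:ℝ)) (b := π) (c := 2 * π) (hInt 0 π) (hInt π (2 * π))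
    have hsecond : ∫ u in π..(2 * π), Real.log (F r u) =
        ∫ u in (0:ℝ)..π, Real.log (F r u) := by
      have := (periodic_logF (r := r)).intervalIntegral_add_eq π 0
      rw [zero_add] at this
      rw [show 2 * π = π + π by ring]
      exact this
    linarith [hsplit, hsecond]
  rw [h1, h2, h3, h4, mu0, smul_eq_mul]
  have hπ : π ≠ 0 := ne_of_gt Real.pi_pos
  field_simp

lemma integrable_of_bounded_cont {f : ℝ → ℝ} (hf : Continuous f) {C : ℝ}
    (hC : ∀ x, |f x| ≤ C) : Integrable f nu := by
  refine ⟨hf.aestronglyMeasurable, ?_⟩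
  apply MeasureTheory.HasFiniteIntegral.of_bounded (C := C)
  exact ae_of_all _ fun x => by rw [Real.norm_eq_abs]; exact hC x

/-- One-step MGF bound. -/
lemma step_mgf (hr : 0 < r) {s : ℝ} (hs : |s| * (2 * r) ≤ 1) (β : ℝ) :
    ∫ a, Real.exp (s * (Real.log (F r (β + a)) - mu0 r)) ∂nu ≤
      Real.exp (3 * r ^ 2 * s ^ 2) := by
  have hr' : (0:ℝ) ≤ r := le_of_lt hr
  set Y : ℝ → ℝ := fun a => s * (Real.log (F r (β + a)) - mu0 r) with hY
  have hYabs : ∀ a, |Y a| ≤ 1 := by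
    intro a
    rw [hY]
    calc |s * (Real.log (F r (β + a)) - mu0 r)| = |s| * |Real.log (F r (β + a)) - mu0 r| := by
          rw [abs_mul]
      _ ≤ |s| * (2 * r) := by
          apply mul_le_mul_of_nonneg_left _ (abs_nonneg s)
          calc |Real.log (F r (β + a)) - mu0 r| ≤ |Real.log (F r (β + a))| + |mu0 r| :=
                abs_sub _ _
            _ ≤ r + r := add_le_add (abs_log_F_le hr' _) (abs_mu0_le hr')
            _ = 2 * r := by ring
      _ ≤ 1 := hs
  have hcont : Continuous Y := by
    rw [hY]
    exact continuous_const.mul (((continuous_logF hr').comp (by fun_prop)).sub continuous_const)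
  have hptwise : ∀ a, Real.exp (Y a) ≤ 1 + Y a + (3/4) * Y a ^ 2 := by
    intro a
    have hb := Real.exp_bound (hYabs a) (by norm_num : 0 < 2)
    have : |Real.exp (Y a) - (1 + Y a)| ≤ |Y a| ^ 2 * (3 / 4) := by
      convert hb using 2
      · simp [Finset.sum_range_succ]
      · norm_num
    have h2 : Real.exp (Y a) - (1 + Y a) ≤ |Y a| ^ 2 * (3/4) := le_trans (le_abs_self _) this
    have h3 : |Y a| ^ 2 = Y a ^ 2 := sq_abs _
    linarith [h2, h3.ge]
  have hint1 : Integrable (fun a => Real.exp (Y a)) nu := by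
    apply integrable_of_bounded_cont (by fun_prop) (C := Real.exp 1)
    intro x
    rw [abs_of_pos (Real.exp_pos _)]
    exact Real.exp_le_exp.2 (le_trans (le_abs_self _) (hYabs x))
  have hint2 : Integrable (fun a => 1 + Y a + (3/4) * Y a ^ 2) nu := by
    apply integrable_of_bounded_cont (by fun_prop) (C := 1 + 1 + (3/4))
    intro x
    have h1 := hYabs x
    have h2 : Y x ^ 2 ≤ 1 := by nlinarith [sq_abs (Y x), abs_nonneg (Y x)]
    have h3 : -1 ≤ Y x := neg_le_of_abs_le h1
    have h4 : Y x ≤ 1 := le_of_abs_le h1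
    rw [abs_le]
    constructor <;> nlinarith
  have hYint : Integrable Y nu := by
    apply integrable_of_bounded_cont hcont (C := 1)
    exact hYabs
  have hY2int : Integrable (fun a => Y a ^ 2) nu := by
    apply integrable_of_bounded_cont (by fun_prop) (C := 1)
    intro x
    rw [abs_of_nonneg (sq_nonneg _)]
    nlinarith [sq_abs (Y x), abs_nonneg (Y x), hYabs x]
  have hEY : ∫ a, Y a ∂nu = 0 := by
    rw [hY]
    rw [integral_const_mul]
    have : ∫ a, (Real.log (F r (β + a)) - mu0 r) ∂nu
        = (∫ a, Real.log (F r (β + a)) ∂nu) - ∫ _, mu0 r ∂nu := by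
      apply integral_sub _ (integrable_const _)
      exact integrable_of_bounded_cont ((continuous_logF hr').comp (by fun_prop)) 
        (fun x => abs_log_F_le hr' _)
    rw [this, integral_logF hr', integral_const]
    simp
  have hEY2 : ∫ a, Y a ^ 2 ∂nu ≤ 4 * s ^ 2 * r ^ 2 := by
    have hp : ∀ a, Y a ^ 2 ≤ 4 * s ^ 2 * r ^ 2 := by
      intro a
      have h1 : |Y a| ≤ |s| * (2 * r) := by
        rw [hY]
        rw [abs_mul]
        apply mul_le_mul_of_nonneg_left _ (abs_nonneg s)
        calc |Real.log (F r (β + a)) - mu0 r| ≤ |Real.log (F r (β + a))| + |mu0 r| :=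
              abs_sub _ _
          _ ≤ r + r := add_le_add (abs_log_F_le hr' _) (abs_mu0_le hr')
          _ = 2 * r := by ring
      nlinarith [sq_abs (Y a), abs_nonneg (Y a), sq_abs s]
    calc ∫ a, Y a ^ 2 ∂nu ≤ ∫ _, 4 * s ^ 2 * r ^ 2 ∂nu :=
          integral_mono hY2int (integrable_const _) hp
      _ = 4 * s ^ 2 * r ^ 2 := by rw [integral_const]; simp
  calc ∫ a, Real.exp (Y a) ∂nu ≤ ∫ a, (1 + Y a + (3/4) * Y a ^ 2) ∂nu :=
        integral_mono hint1 hint2 hptwise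
    _ = 1 + (∫ a, Y a ∂nu) + (3/4) * ∫ a, Y a ^ 2 ∂nu := by
        rw [integral_add (by exact (integrable_const _).add hYint) (hY2int.const_mul _),
          integral_add (integrable_const _) hYint, integral_const]
        simp [MeasureTheory.integral_const_mul]
    _ ≤ 1 + 0 + (3/4) * (4 * s ^ 2 * r ^ 2) := by
        rw [hEY]
        have : (0:ℝ) ≤ 3/4 := by norm_num
        nlinarith [hEY2]
    _ ≤ Real.exp (3 * r ^ 2 * s ^ 2) := by
        have := Real.add_one_le_exp (3 * r ^ 2 * s ^ 2)
        nlinarith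

lemma sq2_vecMul_eq (v : Fin 2 → ℝ) (M : Matrix (Fin 2) (Fin 2) ℝ) :
    sq2 (Matrix.vecMul v M) =
      (v 0 * M 0 0 + v 1 * M 1 0) ^ 2 + (v 0 * M 0 1 + v 1 * M 1 1) ^ 2 := by
  simp [sq2, Matrix.vecMul, dotProduct, Fin.sum_univ_two]

lemma continuous_sq2row (k : ℕ) (β : ℝ) :
    Continuous fun x : Fin k → ℝ => sq2 (Matrix.vecMul (unitVec β) (Mk r k x)) := by
  have hij : ∀ i j, Continuous fun x : Fin k → ℝ => Mk r k x i j :=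
    fun i j => (continuous_Mk k).matrix_elem i j
  simp only [sq2_vecMul_eq]
  fun_prop

lemma measurable_logrow (k : ℕ) (β : ℝ) :
    Measurable fun x : Fin k → ℝ =>
      Real.log (sq2 (Matrix.vecMul (unitVec β) (Mk r k x))) :=
  Real.measurable_log.comp (continuous_sq2row k β).measurable

lemma insertNth_zero_eq_cons {k : ℕ} (a : ℝ) (y : Fin k → ℝ) :
    Fin.insertNth (α := fun _ => ℝ) 0 a y = Fin.cons a y := by
  funext j
  refine Fin.cases ?_ (fun l => ?_) j
  · simp
  · rw [Fin.cons_succ, ← Fin.zero_succAbove l, Fin.insertNth_apply_succAbove]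

/-- Core induction: MGF bound for the log squared norm of a row of the random product. -/
lemma mgf_key (hr : 0 < r) :
    ∀ (k : ℕ) (s : ℝ), |s| * (2 * r) ≤ 1 → ∀ β : ℝ,
      ∫⁻ x, ENNReal.ofReal (Real.exp (s *
          (Real.log (sq2 (Matrix.vecMul (unitVec β) (Mk r k x))) - k * mu0 r)))
        ∂(Measure.pi fun _ : Fin k => nu) ≤
        ENNReal.ofReal (Real.exp (3 * r ^ 2 * s ^ 2 * k)) := by
  intro k
  induction k with
  | zero =>
      intro s hs β
      simp only [Mk_zero, Matrix.vecMul_one, sq2_unitVec, Nat.cast_zero, Real.log_one,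
        zero_mul, mul_zero, sub_zero, Real.exp_zero, ENNReal.ofReal_one, lintegral_const,
        one_mul]
      simp
  | succ k ih =>
      intro s hs β
      have hr' : (0:ℝ) ≤ r := le_of_lt hr
      set μ := mu0 r
      set e := MeasurableEquiv.piFinSuccAbove (fun _ : Fin (k + 1) => ℝ) 0 with he
      have mp := measurePreserving_piFinSuccAbove (fun _ : Fin (k + 1) => nu) 0
      set f : (Fin (k + 1) → ℝ) → ENNReal := fun x => ENNReal.ofReal (Real.exp (s *
          (Real.log (sq2 (Matrix.vecMul (unitVec β) (Mk r (k + 1) x))) - (k + 1 : ℕ) * μ)))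
        with hf
      have hfm : Measurable f := by
        apply ENNReal.measurable_ofReal.comp
        apply Real.measurable_exp.comp
        exact (measurable_const.mul ((measurable_logrow (k+1) β).sub measurable_const))
      have hstep1 : ∫⁻ x, f x ∂(Measure.pi fun _ : Fin (k + 1) => nu) =
          ∫⁻ p, f (e.symm p) ∂(nu.prod (Measure.pi fun _ : Fin k => nu)) := by
        exact ((mp.symm e).lintegral_comp hfm).symm
      have hsymm : ∀ (a : ℝ) (y : Fin k → ℝ), e.symm (a, y) = Fin.cons a y := by
        intro a y
        rw [he]
        show (Fin.insertNthEquiv (fun _ => ℝ) 0) (a, y) = _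
        simp [Fin.insertNthEquiv, insertNth_zero_eq_cons]
      set g1 : ℝ → ENNReal := fun a =>
        ENNReal.ofReal (Real.exp (s * (Real.log (F r (β + a)) - μ))) with hg1
      set g2 : ℝ → (Fin k → ℝ) → ENNReal := fun a y =>
        ENNReal.ofReal (Real.exp (s *
          (Real.log (sq2 (Matrix.vecMul (unitVec (stepA r (β + a))) (Mk r k y))) - k * μ)))
        with hg2
      have hsplit : ∀ (a : ℝ) (y : Fin k → ℝ), f (Fin.cons a y) = g1 a * g2 a y := by
        intro a y
        rw [hf, hg1, hg2]
        simp only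
        rw [sq2_succ hr', Fin.cons_zero, Fin.tail_cons]
        rw [Real.log_mul (ne_of_gt (F_pos hr' _)) (ne_of_gt (sq2_pos hr' k y _))]
        rw [← ENNReal.ofReal_mul (le_of_lt (Real.exp_pos _)), ← Real.exp_add]
        congr 2
        push_cast
        ring
      have hg1m : Measurable g1 := by
        apply ENNReal.measurable_ofReal.comp
        apply Real.measurable_exp.comp
        exact measurable_const.mul
          ((((continuous_logF hr').comp (by fun_prop)).measurable).sub measurable_const)
      have hprod : ∫⁻ p, f (e.symm p) ∂(nu.prod (Measure.pi fun _ : Fin k => nu)) =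
          ∫⁻ a, ∫⁻ y, f (e.symm (a, y)) ∂(Measure.pi fun _ : Fin k => nu) ∂nu := by
        apply lintegral_prod
        exact (hfm.comp e.symm.measurable).aemeasurable
      have hinner : ∀ a : ℝ,
          (∫⁻ y, f (e.symm (a, y)) ∂(Measure.pi fun _ : Fin k => nu)) ≤
            g1 a * ENNReal.ofReal (Real.exp (3 * r ^ 2 * s ^ 2 * k)) := by
        intro a
        have : ∀ y, f (e.symm (a, y)) = g1 a * g2 a y := by
          intro y; rw [hsymm, hsplit]
        rw [lintegral_congr this]
        rw [lintegral_const_mul' _ _ ENNReal.ofReal_ne_top]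
        exact mul_le_mul_right (ih s hs (stepA r (β + a))) _
      calc ∫⁻ x, f x ∂(Measure.pi fun _ : Fin (k + 1) => nu)
          = ∫⁻ a, ∫⁻ y, f (e.symm (a, y)) ∂(Measure.pi fun _ : Fin k => nu) ∂nu := by
            rw [hstep1, hprod]
        _ ≤ ∫⁻ a, g1 a * ENNReal.ofReal (Real.exp (3 * r ^ 2 * s ^ 2 * k)) ∂nu :=
            lintegral_mono hinner
        _ = (∫⁻ a, g1 a ∂nu) * ENNReal.ofReal (Real.exp (3 * r ^ 2 * s ^ 2 * k)) :=
            lintegral_mul_const' _ _ ENNReal.ofReal_ne_top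
        _ ≤ ENNReal.ofReal (Real.exp (3 * r ^ 2 * s ^ 2)) *
              ENNReal.ofReal (Real.exp (3 * r ^ 2 * s ^ 2 * k)) := by
            apply mul_le_mul_left
            have hInt : Integrable (fun a => Real.exp (s * (Real.log (F r (β + a)) - μ))) nu := by
              apply integrable_of_bounded_cont
              · exact Real.continuous_exp.comp (continuous_const.mul
                  (((continuous_logF hr').comp (by fun_prop)).sub continuous_const))
              · intro x
                rw [abs_of_pos (Real.exp_pos _)]
                apply Real.exp_le_exp.2
                calc s * (Real.log (F r (β + x)) - μ) ≤ |s * (Real.log (F r (β + x)) - μ)| :=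
                      le_abs_self _
                  _ ≤ |s| * (2 * r) := by
                      rw [abs_mul]
                      apply mul_le_mul_of_nonneg_left _ (abs_nonneg s)
                      calc |Real.log (F r (β + x)) - μ| ≤ |Real.log (F r (β + x))| + |μ| :=
                            abs_sub _ _
                        _ ≤ r + r := add_le_add (abs_log_F_le hr' _) (abs_mu0_le hr')
                        _ = 2 * r := by ring
                  _ ≤ 1 := hs
            rw [hg1]
            rw [← ofReal_integral_eq_lintegral_ofReal hInt
              (ae_of_all _ fun x => le_of_lt (Real.exp_pos _))]
            exact ENNReal.ofReal_le_ofReal (step_mgf hr hs β)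
        _ = ENNReal.ofReal (Real.exp (3 * r ^ 2 * s ^ 2 * (k + 1 : ℕ))) := by
            rw [← ENNReal.ofReal_mul (le_of_lt (Real.exp_pos _)), ← Real.exp_add]
            congr 2
            push_cast
            ring

/-- The joint law of `k` i.i.d. `nu`-distributed random variables is the product measure. -/
lemma map_pi {Ω : Type} [MeasurableSpace Ω] (P : Measure Ω) [IsProbabilityMeasure P]
    (θ : ℕ → Ω → ℝ) (hm : ∀ j, Measurable (θ j))
    (hi : iIndepFun (m := fun _ => Real.measurableSpace) θ P)
    (hd : ∀ j, Measure.map (θ j) P = nu) (k : ℕ) :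
    Measure.map (fun ω (j : Fin k) => θ j ω) P = Measure.pi (fun _ => nu) := by
  symm
  apply Measure.pi_eq
  intro s hs
  have hΦ : Measurable fun ω (j : Fin k) => θ j ω :=
    measurable_pi_lambda _ fun j => hm j
  rw [Measure.map_apply hΦ (MeasurableSet.univ_pi hs)]
  set sets : ℕ → Set ℝ := fun i => if h : i < k then s ⟨i, h⟩ else Set.univ with hsets
  have hsets_meas : ∀ i, i ∈ Finset.range k → MeasurableSet (sets i) := by
    intro i _
    rw [hsets]
    by_cases h : i < k
    · simp only [h, dif_pos]; exact hs _
    · simp only [h, dif_neg]; exact MeasurableSet.univ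
  have hset_eq : (fun ω (j : Fin k) => θ j ω) ⁻¹' Set.univ.pi s =
      ⋂ i ∈ Finset.range k, θ i ⁻¹' sets i := by
    ext ω
    simp only [Set.mem_preimage, Set.mem_univ_pi, Set.mem_iInter, Finset.mem_range, hsets]
    constructor
    · intro h i hi'
      simp only [hi', dif_pos]
      exact h ⟨i, hi'⟩
    · intro h j
      have := h j.1 j.2
      simpa only [j.2, dif_pos, Fin.eta] using this
  rw [hset_eq, hi.measure_inter_preimage_eq_mul (Finset.range k) hsets_meas]
  rw [← Fin.prod_univ_eq_prod_range (fun i => P (θ i ⁻¹' sets i)) k]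
  apply Finset.prod_congr rfl
  intro j _
  rw [← Measure.map_apply (hm j) (by
    rw [hsets]; simp only [j.2, dif_pos]; exact hs _), hd j]
  congr 1
  rw [hsets]
  simp only [j.2, dif_pos, Fin.eta]

variable {r : ℝ}

/-- One-sided Chernoff bound for a single row. -/
lemma tail_one (hr : 0 < r) (k : ℕ) (β : ℝ) {s : ℝ} (hs : |s| * (2 * r) ≤ 1) (u : ℝ) :
    (Measure.pi fun _ : Fin k => nu)
      {x | u ≤ s * (Real.log (sq2 (Matrix.vecMul (unitVec β) (Mk r k x))) - k * mu0 r)} ≤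
      ENNReal.ofReal (Real.exp (3 * r ^ 2 * s ^ 2 * k - u)) := by
  set G : (Fin k → ℝ) → ℝ := fun x =>
    s * (Real.log (sq2 (Matrix.vecMul (unitVec β) (Mk r k x))) - k * mu0 r) with hG
  have hGm : Measurable G :=
    measurable_const.mul ((measurable_logrow k β).sub measurable_const)
  have hmono : {x | u ≤ G x} ⊆ {x | ENNReal.ofReal (Real.exp u) ≤
      ENNReal.ofReal (Real.exp (G x))} := by
    intro x hx
    exact ENNReal.ofReal_le_ofReal (Real.exp_le_exp.2 hx)
  have hmarkov := mul_meas_ge_le_lintegral₀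
    (μ := Measure.pi fun _ : Fin k => nu)
    (f := fun x => ENNReal.ofReal (Real.exp (G x)))
    ((ENNReal.measurable_ofReal.comp (Real.measurable_exp.comp hGm)).aemeasurable)
    (ENNReal.ofReal (Real.exp u))
  have hkey := le_trans hmarkov (mgf_key hr k s hs β)
  have h1 : (Measure.pi fun _ : Fin k => nu) {x | u ≤ G x} ≤
      (Measure.pi fun _ : Fin k => nu)
        {x | ENNReal.ofReal (Real.exp u) ≤ ENNReal.ofReal (Real.exp (G x))} :=
    measure_mono hmono
  have hne0 : ENNReal.ofReal (Real.exp u) ≠ 0 :=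
    ne_of_gt (ENNReal.ofReal_pos.2 (Real.exp_pos u))
  have hnetop : ENNReal.ofReal (Real.exp u) ≠ ⊤ := ENNReal.ofReal_ne_top
  calc (Measure.pi fun _ : Fin k => nu) {x | u ≤ G x}
      ≤ (Measure.pi fun _ : Fin k => nu)
        {x | ENNReal.ofReal (Real.exp u) ≤ ENNReal.ofReal (Real.exp (G x))} := h1
    _ ≤ ENNReal.ofReal (Real.exp (3 * r ^ 2 * s ^ 2 * k)) / ENNReal.ofReal (Real.exp u) := by
        rw [ENNReal.le_div_iff_mul_le (Or.inl hne0) (Or.inl hnetop), mul_comm]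
        exact hkey
    _ = ENNReal.ofReal (Real.exp (3 * r ^ 2 * s ^ 2 * k - u)) := by
        rw [← ENNReal.ofReal_div_of_pos (Real.exp_pos u), ← Real.exp_sub]

/-- Two-sided tail bound for a single row. -/
lemma tail_abs (hr : 0 < r) (k : ℕ) (β : ℝ) {s : ℝ} (hs0 : 0 ≤ s)
    (hs : s * (2 * r) ≤ 1) (u : ℝ) :
    (Measure.pi fun _ : Fin k => nu)
      {x | u ≤ |Real.log (sq2 (Matrix.vecMul (unitVec β) (Mk r k x))) - k * mu0 r|} ≤
      2 * ENNReal.ofReal (Real.exp (3 * r ^ 2 * s ^ 2 * k - s * u)) := by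
  have habs : |s| * (2 * r) ≤ 1 := by rwa [abs_of_nonneg hs0]
  have habs' : |(-s)| * (2 * r) ≤ 1 := by rwa [abs_neg, abs_of_nonneg hs0]
  set G : (Fin k → ℝ) → ℝ := fun x =>
    Real.log (sq2 (Matrix.vecMul (unitVec β) (Mk r k x))) - k * mu0 r with hG
  have hsub : {x | u ≤ |G x|} ⊆
      {x | s * u ≤ s * G x} ∪ {x | s * u ≤ (-s) * G x} := by
    intro x hx
    rcases abs_cases (G x) with ⟨habs1, _⟩ | ⟨habs1, _⟩
    · left
      exact mul_le_mul_of_nonneg_left (habs1 ▸ hx) hs0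
    · right
      simp only [Set.mem_setOf_eq, neg_mul]
      have : s * u ≤ s * (-G x) := mul_le_mul_of_nonneg_left (habs1 ▸ hx) hs0
      linarith
  calc (Measure.pi fun _ : Fin k => nu) {x | u ≤ |G x|}
      ≤ (Measure.pi fun _ : Fin k => nu) ({x | s * u ≤ s * G x} ∪ {x | s * u ≤ (-s) * G x}) :=
        measure_mono hsub
    _ ≤ (Measure.pi fun _ : Fin k => nu) {x | s * u ≤ s * G x} +
        (Measure.pi fun _ : Fin k => nu) {x | s * u ≤ (-s) * G x} := measure_union_le _ _
    _ ≤ ENNReal.ofReal (Real.exp (3 * r ^ 2 * s ^ 2 * k - s * u)) +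
        ENNReal.ofReal (Real.exp (3 * r ^ 2 * (-s) ^ 2 * k - s * u)) :=
        add_le_add (tail_one hr k β habs (s * u)) (tail_one hr k β habs' (s * u))
    _ = 2 * ENNReal.ofReal (Real.exp (3 * r ^ 2 * s ^ 2 * k - s * u)) := by
        rw [neg_sq]; ring


variable {r : ℝ}

lemma Q2_eq_rows (k : ℕ) (x : Fin k → ℝ) :
    Q2 (Mk r k x) = sq2 (Matrix.vecMul (unitVec 0) (Mk r k x)) +
      sq2 (Matrix.vecMul (unitVec (π / 2)) (Mk r k x)) := by
  rw [sq2_vecMul_eq, sq2_vecMul_eq]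
  simp only [unitVec, Matrix.cons_val_zero, Matrix.cons_val_one, Matrix.head_cons,
    Real.cos_zero, Real.sin_zero, Real.cos_pi_div_two, Real.sin_pi_div_two, Q2]
  ring

/-- Deterministic reduction: large deviation of the hyperbolic distance forces a large
deviation of one of the two row norms. -/
lemma event_incl (hr : 0 ≤ r) (k : ℕ) (x : Fin k → ℝ) (t : ℝ)
    (ht : t ≤ |hypDist (moebius (Mk r k x) Complex.I) Complex.I - k * mu0 r|) :
    t - 2 * Real.log 2 ≤
        |Real.log (sq2 (Matrix.vecMul (unitVec 0) (Mk r k x))) - k * mu0 r| ∨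
      t - 2 * Real.log 2 ≤
        |Real.log (sq2 (Matrix.vecMul (unitVec (π / 2)) (Mk r k x))) - k * mu0 r| := by
  set N0 := sq2 (Matrix.vecMul (unitVec 0) (Mk r k x)) with hN0
  set N1 := sq2 (Matrix.vecMul (unitVec (π / 2)) (Mk r k x)) with hN1
  have hN0pos : 0 < N0 := sq2_pos hr k x 0
  have hN1pos : 0 < N1 := sq2_pos hr k x (π / 2)
  have hQ : Q2 (Mk r k x) = N0 + N1 := Q2_eq_rows k x
  have hd := hypDist_log_Q2 (det_Mk (r := r) k x)
  set h := hypDist (moebius (Mk r k x) Complex.I) Complex.I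
  set L := max (Real.log N0) (Real.log N1) with hL
  have hlogmax : L ≤ Real.log (Q2 (Mk r k x)) ∧
      Real.log (Q2 (Mk r k x)) ≤ L + Real.log 2 := by
    constructor
    · rw [hL, max_le_iff]
      constructor
      · apply Real.log_le_log hN0pos; rw [hQ]; linarith
      · apply Real.log_le_log hN1pos; rw [hQ]; linarith
    · rcases le_total N0 N1 with hc | hc
      · calc Real.log (Q2 (Mk r k x)) ≤ Real.log (2 * N1) := by
              apply Real.log_le_log (by rw [hQ]; linarith); rw [hQ]; linarith
          _ = Real.log 2 + Real.log N1 := Real.log_mul (by norm_num) (ne_of_gt hN1pos)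
          _ ≤ L + Real.log 2 := by rw [hL]; have := le_max_right (Real.log N0) (Real.log N1); linarith
      · calc Real.log (Q2 (Mk r k x)) ≤ Real.log (2 * N0) := by
              apply Real.log_le_log (by rw [hQ]; linarith); rw [hQ]; linarith
          _ = Real.log 2 + Real.log N0 := Real.log_mul (by norm_num) (ne_of_gt hN0pos)
          _ ≤ L + Real.log 2 := by rw [hL]; have := le_max_left (Real.log N0) (Real.log N1); linarith
  have hLdev : t - 2 * Real.log 2 ≤ |L - k * mu0 r| := by
    have h1 : |h - L| ≤ 2 * Real.log 2 := by
      have h2 : |Real.log (Q2 (Mk r k x)) - L| ≤ Real.log 2 := by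
        rw [abs_le]; constructor <;> linarith [hlogmax.1, hlogmax.2]
      calc |h - L| ≤ |h - Real.log (Q2 (Mk r k x))| + |Real.log (Q2 (Mk r k x)) - L| := by
            have := abs_sub_le h (Real.log (Q2 (Mk r k x))) L
            linarith
        _ ≤ Real.log 2 + Real.log 2 := add_le_add hd h2
        _ = 2 * Real.log 2 := by ring
    have h3 : |h - k * mu0 r| ≤ |h - L| + |L - k * mu0 r| := abs_sub_le _ _ _
    linarith
  rcases max_cases (Real.log N0) (Real.log N1) with ⟨hmax, _⟩ | ⟨hmax, _⟩
  · left; rw [hL, hmax] at hLdev; exact hLdev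
  · right; rw [hL, hmax] at hLdev; exact hLdev

/-- Deterministic global bound on the deviation. -/
lemma global_bound (hr : 0 ≤ r) (k : ℕ) (hk : 1 ≤ k) (x : Fin k → ℝ) :
    |hypDist (moebius (Mk r k x) Complex.I) Complex.I - k * mu0 r| ≤ (2 * r + 1) * k := by
  have hdet := det_Mk (r := r) k x
  have hQ2 := Q2_ge_two hdet
  have h1 : (1:ℝ) ≤ Q2 (Mk r k x) / 2 := by linarith
  obtain ⟨hlo, hhi⟩ := arcosh_sandwich h1
  rw [hypDist_moebius hdet]
  have hQup : Q2 (Mk r k x) ≤ 2 * Real.exp (r * k) := by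
    rw [Q2_eq_rows]
    have h0 := (sq2_bounds hr k x 0).2
    have h1 := (sq2_bounds hr k x (π / 2)).2
    linarith
  have hup : _root_.arcosh (Q2 (Mk r k x) / 2) ≤ Real.log 2 + r * k := by
    calc _root_.arcosh (Q2 (Mk r k x) / 2) ≤ Real.log (2 * (Q2 (Mk r k x) / 2)) := hhi
      _ ≤ Real.log (2 * Real.exp (r * k)) := by
          apply Real.log_le_log (by linarith) (by linarith)
      _ = Real.log 2 + r * k := by
          rw [Real.log_mul (by norm_num) (ne_of_gt (Real.exp_pos _)), Real.log_exp]
  have hlow : 0 ≤ _root_.arcosh (Q2 (Mk r k x) / 2) := by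
    calc (0:ℝ) = Real.log 1 := Real.log_one.symm
      _ ≤ Real.log (Q2 (Mk r k x) / 2) := Real.log_le_log one_pos h1
      _ ≤ _root_.arcosh (Q2 (Mk r k x) / 2) := hlo
  have hmuk : |(k:ℝ) * mu0 r| ≤ k * r := by
    rw [abs_mul, abs_of_nonneg (by positivity : (0:ℝ) ≤ (k:ℝ))]
    exact mul_le_mul_of_nonneg_left (abs_mu0_le hr) (by positivity)
  have hk1 : (1:ℝ) ≤ (k:ℝ) := by exact_mod_cast hk
  have hlog2 : Real.log 2 ≤ 1 := by
    calc Real.log 2 ≤ Real.log (Real.exp 1) := by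
          apply Real.log_le_log (by norm_num)
          have := Real.add_one_le_exp 1
          linarith
      _ = 1 := Real.log_exp 1
  have hcomm : (k:ℝ) * r = r * (k:ℝ) := mul_comm _ _
  have hrk : r * (k:ℝ) ≤ (r + 1) * (k:ℝ) :=
    mul_le_mul_of_nonneg_right (by linarith) (by positivity)
  have hrknn : 0 ≤ r * (k:ℝ) := mul_nonneg hr (by positivity)
  rw [abs_le]
  constructor
  · have := le_abs_self ((k:ℝ) * mu0 r)
    linarith
  · have := neg_abs_le ((k:ℝ) * mu0 r)
    linarith

lemma measurable_D (k : ℕ) :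
    Measurable fun x : Fin k → ℝ =>
      hypDist (moebius (Mk r k x) Complex.I) Complex.I := by
  have heq : (fun x : Fin k → ℝ => hypDist (moebius (Mk r k x) Complex.I) Complex.I) =
      fun x => _root_.arcosh (Q2 (Mk r k x) / 2) :=
    funext fun x => hypDist_moebius (det_Mk k x)
  rw [heq]
  have hQ : Continuous fun x : Fin k → ℝ => Q2 (Mk r k x) / 2 := by
    have hij : ∀ i j, Continuous fun x : Fin k → ℝ => Mk r k x i j :=
      fun i j => (continuous_Mk k).matrix_elem i j
    unfold Q2
    fun_prop
  unfold _root_.arcosh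
  exact Real.measurable_log.comp
    ((hQ.add ((Real.continuous_sqrt.comp ((hQ.pow 2).sub continuous_const)))).measurable)


end WalkConc

lemma arith1 {r c u lam kR : ℝ} (hr : 0 < r) (hk : 1 ≤ kR) (hc : 0 < c)
    (hcle : c ≤ 1 / (48 * r ^ 2)) (hlam : 0 ≤ lam)
    (hut : lam ^ 2 * kR ≤ 4 * u ^ 2) :
    3 * r ^ 2 * (u / (6 * r ^ 2 * kR)) ^ 2 * kR - (u / (6 * r ^ 2 * kR)) * u ≤
      -(c * lam ^ 2) := by
  have hkpos : 0 < kR := lt_of_lt_of_le one_pos hk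
  have e1 : 3 * r ^ 2 * (u / (6 * r ^ 2 * kR)) ^ 2 * kR - (u / (6 * r ^ 2 * kR)) * u =
      -(u ^ 2 / (12 * r ^ 2 * kR)) := by
    field_simp
    ring
  rw [e1, neg_le_neg_iff, le_div_iff₀ (by positivity)]
  have hc48 : c * (48 * r ^ 2) ≤ 1 := by
    rw [← le_div_iff₀ (by positivity : (0:ℝ) < 48 * r ^ 2)]
    exact hcle
  have hprod : c * (48 * r ^ 2) * (lam ^ 2 * kR) ≤ 1 * (lam ^ 2 * kR) :=
    mul_le_mul_of_nonneg_right hc48 (mul_nonneg (sq_nonneg lam) hkpos.le)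
  nlinarith [hut]

lemma arith2 {r c u lam kR t : ℝ} (hr : 0 < r) (hk : 1 ≤ kR) (hc : 0 < c)
    (hcle : c ≤ 1 / (8 * r * (2 * r + 1))) (hmin : 1 / (2 * r) ≤ u / (6 * r ^ 2 * kR))
    (hu2 : t / 2 ≤ u) (hlam2 : lam ^ 2 ≤ (2 * r + 1) * t) (ht0 : 0 ≤ t) :
    3 * r ^ 2 * (1 / (2 * r)) ^ 2 * kR - (1 / (2 * r)) * u ≤ -(c * lam ^ 2) := by
  have hkpos : 0 < kR := lt_of_lt_of_le one_pos hk
  have hu3 : 3 * r * kR ≤ u := by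
    rw [div_le_div_iff₀ (by positivity) (by positivity)] at hmin
    nlinarith
  have hclam : c * lam ^ 2 * (8 * r) ≤ t := by
    have h1 : c * lam ^ 2 ≤ t / (8 * r) := by
      calc c * lam ^ 2 ≤ c * ((2 * r + 1) * t) :=
            mul_le_mul_of_nonneg_left hlam2 (le_of_lt hc)
        _ ≤ 1 / (8 * r * (2 * r + 1)) * ((2 * r + 1) * t) := by
            apply mul_le_mul_of_nonneg_right hcle
            positivity
        _ = t / (8 * r) := by field_simp
    rw [← le_div_iff₀ (by positivity : (0:ℝ) < 8 * r)]
    exact h1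
  have key : 3 * kR * r - 2 * u ≤ -(c * lam ^ 2 * (4 * r)) := by nlinarith
  have e1 : 3 * r ^ 2 * (1 / (2 * r)) ^ 2 * kR - (1 / (2 * r)) * u =
      (3 * kR * r - 2 * u) / (4 * r) := by
    field_simp
    ring
  have e3 : -(c * lam ^ 2) = -(c * lam ^ 2 * (4 * r)) / (4 * r) := by field_simp
  rw [e1, e3]
  gcongr

open WalkConc

/-- Concentration for the rate of escape of the discrete random walk on the hyperbolic
plane: for fixed `r₁ > 0` there are `C, c > 0` depending only on `r₁` such that whenever
`θ₁, θ₂, …` are i.i.d. uniform on `[0, 2π)` and `z_k` is the `k`-step distance-`r₁` walk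
started at `i`, for every `k ≥ 1` and `λ ≥ 0`,
`P(|d(z_k, i) − α_{r₁}·r₁·k| ≥ λ·√k) ≤ C·e^{−c·λ²}`. -/
theorem walk_distance_concentration (r₁ : ℝ) (hr : 0 < r₁) :
    ∃ C : ℝ, 0 < C ∧ ∃ c : ℝ, 0 < c ∧
      ∀ (Ω : Type) [MeasurableSpace Ω] (P : Measure Ω) [IsProbabilityMeasure P]
        (θ : ℕ → Ω → ℝ), (∀ j, Measurable (θ j)) →
        iIndepFun (m := fun _ => Real.measurableSpace) θ P →
        (∀ j, Measure.map (θ j) P =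
          (ENNReal.ofReal (2 * π))⁻¹ • volume.restrict (Set.Ico (0:ℝ) (2 * π))) →
        ∀ k : ℕ, 1 ≤ k → ∀ lam : ℝ, 0 ≤ lam →
          P {ω | lam * Real.sqrt k ≤
              |hypDist (walk r₁ k fun j => θ j ω) Complex.I - alphaRate r₁ * r₁ * k|} ≤
            ENNReal.ofReal (C * Real.exp (-c * lam ^ 2)) := by
  have hr' : (0:ℝ) ≤ r₁ := le_of_lt hr
  set c : ℝ := min (1 / (48 * r₁ ^ 2)) (1 / (8 * r₁ * (2 * r₁ + 1))) with hcdef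
  have hc : 0 < c := lt_min (by positivity) (by positivity)
  set C : ℝ := 4 * Real.exp (9 * c) with hCdef
  have hC : 0 < C := by positivity
  refine ⟨C, hC, c, hc, ?_⟩
  intro Ω mΩ P instP θ hm hi hd k hk lam hlam
  -- drift identification
  have halpha : alphaRate r₁ * r₁ = mu0 r₁ := by
    rw [alphaRate, mu0]
    simp only [F]
    have hπ : π ≠ 0 := ne_of_gt Real.pi_pos
    have hrne : r₁ ≠ 0 := ne_of_gt hr
    field_simp
  have hdrift : alphaRate r₁ * r₁ * (k:ℝ) = (k:ℝ) * mu0 r₁ := by rw [halpha]; ring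
  -- transfer to the product measure
  set Φ : Ω → (Fin k → ℝ) := fun ω (j : Fin k) => θ j ω with hΦdef
  have hΦ : Measurable Φ := measurable_pi_lambda _ fun j => hm j
  set T : Set (Fin k → ℝ) := {x | lam * Real.sqrt k ≤
      |hypDist (moebius (Mk r₁ k x) Complex.I) Complex.I - (k:ℝ) * mu0 r₁|} with hTdef
  have hTmeas : MeasurableSet T :=
    measurableSet_le measurable_const ((measurable_D k).sub measurable_const).abs
  have hsets : {ω | lam * Real.sqrt k ≤
      |hypDist (walk r₁ k fun j => θ j ω) Complex.I - alphaRate r₁ * r₁ * k|} = Φ ⁻¹' T := by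
    ext ω
    simp only [Set.mem_setOf_eq, Set.mem_preimage, hTdef, hΦdef, hdrift]
    rfl
  have hmap := map_pi P θ hm hi (fun j => hd j) k
  have hPeq : P {ω | lam * Real.sqrt k ≤
      |hypDist (walk r₁ k fun j => θ j ω) Complex.I - alphaRate r₁ * r₁ * k|} =
      (Measure.pi fun _ : Fin k => nu) T := by
    rw [hsets, ← Measure.map_apply hΦ hTmeas, hmap]
  rw [hPeq]
  set t : ℝ := lam * Real.sqrt k with htdef
  have hkpos : (0:ℝ) < (k:ℝ) := by
    have : (1:ℝ) ≤ (k:ℝ) := by exact_mod_cast hk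
    linarith
  have hk1 : (1:ℝ) ≤ (k:ℝ) := by exact_mod_cast hk
  have hsqrtpos : 0 < Real.sqrt k := Real.sqrt_pos.2 hkpos
  have hsqrt1 : 1 ≤ Real.sqrt k := by
    rw [show (1:ℝ) = Real.sqrt 1 by rw [Real.sqrt_one]]
    exact Real.sqrt_le_sqrt hk1
  have hsq : Real.sqrt k ^ 2 = (k:ℝ) := Real.sq_sqrt (le_of_lt hkpos)
  have ht0 : 0 ≤ t := mul_nonneg hlam (Real.sqrt_nonneg _)
  by_cases hbig : (2 * r₁ + 1) * k < t
  · -- event is empty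
    have hTempty : T = ∅ := by
      ext x
      simp only [hTdef, Set.mem_setOf_eq, Set.mem_empty_iff_false, iff_false, not_le]
      calc |hypDist (moebius (Mk r₁ k x) Complex.I) Complex.I - (k:ℝ) * mu0 r₁| ≤
            (2 * r₁ + 1) * k := global_bound hr' k hk x
        _ < t := hbig
    rw [hTempty, measure_empty]
    exact zero_le
  · push_neg at hbig
    by_cases hsmall : t < 4 * Real.log 2
    · -- trivial bound by 1
      have hlamlt : lam < 3 := by
        have h1 : lam ≤ t := by
          rw [htdef]
          calc lam = lam * 1 := by ring
            _ ≤ lam * Real.sqrt k := mul_le_mul_of_nonneg_left hsqrt1 hlam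
        have h2 : Real.log 2 < 0.6931471808 := Real.log_two_lt_d9
        linarith
      have h1le : (1:ℝ) ≤ C * Real.exp (-c * lam ^ 2) := by
        rw [hCdef]
        have : 4 * Real.exp (9 * c) * Real.exp (-c * lam ^ 2) =
            4 * Real.exp (9 * c + -c * lam ^ 2) := by rw [Real.exp_add]; ring
        rw [this]
        have hlam9 : lam ^ 2 ≤ 9 := by nlinarith
        have hexp : 0 ≤ 9 * c + -c * lam ^ 2 := by
          linarith [mul_nonneg hc.le (by linarith : (0:ℝ) ≤ 9 - lam ^ 2)]
        have := Real.one_le_exp hexp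
        linarith
      calc (Measure.pi fun _ : Fin k => nu) T ≤ 1 := prob_le_one
        _ ≤ ENNReal.ofReal (C * Real.exp (-c * lam ^ 2)) := by
            rw [← ENNReal.ofReal_one]
            exact ENNReal.ofReal_le_ofReal h1le
    · push_neg at hsmall
      have hlog2pos : 0 < Real.log 2 := Real.log_pos one_lt_two
      set u : ℝ := t - 2 * Real.log 2 with hudef
      have hu2 : t / 2 ≤ u := by rw [hudef]; linarith
      have hu0 : 0 ≤ u := by linarith
      set s₀ : ℝ := min (u / (6 * r₁ ^ 2 * k)) (1 / (2 * r₁)) with hs₀def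
      have hs00 : 0 ≤ s₀ := le_min (by positivity) (by positivity)
      have hs0le : s₀ * (2 * r₁) ≤ 1 := by
        have h1 : s₀ ≤ 1 / (2 * r₁) := min_le_right _ _
        calc s₀ * (2 * r₁) ≤ 1 / (2 * r₁) * (2 * r₁) :=
              mul_le_mul_of_nonneg_right h1 (by positivity)
          _ = 1 := by field_simp
      -- the exponent bound
      have hexp : 3 * r₁ ^ 2 * s₀ ^ 2 * k - s₀ * u ≤ -(c * lam ^ 2) := by
        have ht2 : t ^ 2 = lam ^ 2 * k := by rw [htdef, mul_pow, hsq]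
        have hut' : t ^ 2 ≤ 4 * u ^ 2 := by nlinarith
        have hut : lam ^ 2 * (k:ℝ) ≤ 4 * u ^ 2 := by linarith [ht2.symm.le]
        rcases le_total (u / (6 * r₁ ^ 2 * k)) (1 / (2 * r₁)) with hmin | hmin
        · rw [hs₀def, min_eq_left hmin]
          exact arith1 hr hk1 hc (min_le_left _ _) hlam hut
        · rw [hs₀def, min_eq_right hmin]
          have hlamle : lam ≤ (2 * r₁ + 1) * Real.sqrt k := by
            apply le_of_mul_le_mul_right _ hsqrtpos
            calc lam * Real.sqrt k = t := rfl
              _ ≤ (2 * r₁ + 1) * k := hbig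
              _ = (2 * r₁ + 1) * Real.sqrt k * Real.sqrt k := by
                  symm
                  rw [mul_assoc, Real.mul_self_sqrt (le_of_lt hkpos)]
          have hlam2 : lam ^ 2 ≤ (2 * r₁ + 1) * t := by
            calc lam ^ 2 = lam * lam := sq lam
              _ ≤ (2 * r₁ + 1) * Real.sqrt k * lam := mul_le_mul_of_nonneg_right hlamle hlam
              _ = (2 * r₁ + 1) * t := by rw [htdef]; ring
          exact arith2 hr hk1 hc (min_le_right _ _) hmin hu2 hlam2 ht0
      -- combine the tail bounds
      set A : Set (Fin k → ℝ) :=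
        {x | u ≤ |Real.log (sq2 (Matrix.vecMul (unitVec 0) (Mk r₁ k x))) - k * mu0 r₁|} with hA
      set B : Set (Fin k → ℝ) :=
        {x | u ≤ |Real.log (sq2 (Matrix.vecMul (unitVec (π / 2)) (Mk r₁ k x))) - k * mu0 r₁|}
        with hB
      have hincl : T ⊆ A ∪ B := by
        intro x hx
        rcases event_incl hr' k x t hx with h | h
        · exact Or.inl h
        · exact Or.inr h
      set X := ENNReal.ofReal (Real.exp (3 * r₁ ^ 2 * s₀ ^ 2 * k - s₀ * u)) with hX
      calc (Measure.pi fun _ : Fin k => nu) T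
          ≤ (Measure.pi fun _ : Fin k => nu) (A ∪ B) := measure_mono hincl
        _ ≤ (Measure.pi fun _ : Fin k => nu) A + (Measure.pi fun _ : Fin k => nu) B :=
            measure_union_le _ _
        _ ≤ 2 * X + 2 * X :=
            add_le_add (tail_abs hr k 0 hs00 hs0le u) (tail_abs hr k (π / 2) hs00 hs0le u)
        _ = 4 * X := by ring
        _ ≤ ENNReal.ofReal (C * Real.exp (-c * lam ^ 2)) := by
            have h1 : Real.exp (3 * r₁ ^ 2 * s₀ ^ 2 * (k:ℝ) - s₀ * u) ≤
                Real.exp (-c * lam ^ 2) := by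
              apply Real.exp_le_exp.2
              have : -c * lam ^ 2 = -(c * lam ^ 2) := by ring
              rw [this]
              exact hexp
            calc (4:ENNReal) * X ≤ 4 * ENNReal.ofReal (Real.exp (-c * lam ^ 2)) :=
                  mul_le_mul_right (ENNReal.ofReal_le_ofReal h1) _
              _ = ENNReal.ofReal (4 * Real.exp (-c * lam ^ 2)) := by
                  rw [ENNReal.ofReal_mul (by norm_num : (0:ℝ) ≤ 4), ENNReal.ofReal_ofNat]
              _ ≤ ENNReal.ofReal (C * Real.exp (-c * lam ^ 2)) := by
                  apply ENNReal.ofReal_le_ofReal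
                  apply mul_le_mul_of_nonneg_right _ (le_of_lt (Real.exp_pos _))
                  rw [hCdef]
                  linarith [Real.one_le_exp (by positivity : (0:ℝ) ≤ 9 * c)]
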